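/- For every positive integer n and positive integer h, Σ_{d² ∣ n} μ(d) Σ_{m ∣ n/d²} m^h = n^h · Π_{p ∣ n prime} (1 + 1/p^h). -/

import Mathlib

open ArithmeticFunction Finset
open scoped ArithmeticFunction.Moebius

namespace Stmt4Aux

open scoped Classical in
/-- `g n = μ (√n)` if `n` is a square, else `0`. -/
noncomputable def g : ArithmeticFunction ℝ :=
  ⟨fun n => if IsSquare n then (ArithmeticFunction.moebius n.sqrt : ℝ) else 0, by simp⟩

lemma g_sq (a : ℕ) : g (a ^ 2) = (μ a : ℝ) := by
  simp only [g, ArithmeticFunction.coe_mk]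
  rw [if_pos (IsSquare.sq a), Nat.sqrt_eq']

lemma g_not_sq {n : ℕ} (hn : ¬ IsSquare n) : g n = 0 := by
  simp only [g, ArithmeticFunction.coe_mk, if_neg hn]

lemma g_one : g 1 = 1 := by
  have := g_sq 1
  simpa using this

lemma not_sq_mul {m n : ℕ} (hmn : m.Coprime n) (hm : ¬ IsSquare m) :
    ¬ IsSquare (m * n) := by
  rintro ⟨c, hc⟩
  have hu : IsUnit (gcd m n) := by
    simpa [Nat.isUnit_iff, gcd_eq_nat_gcd, Nat.Coprime] using hmn
  obtain ⟨d, hd⟩ := exists_eq_pow_of_mul_eq_pow hu (k := 2) (by rw [hc, sq])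
  exact hm ⟨d, by rw [hd, sq]⟩

lemma g_mult : g.IsMultiplicative := by
  rw [ArithmeticFunction.IsMultiplicative.iff_ne_zero]
  refine ⟨g_one, ?_⟩
  intro m n hm hn hmn
  by_cases hsm : IsSquare m
  · by_cases hsn : IsSquare n
    · obtain ⟨a, rfl⟩ := (isSquare_iff_exists_sq m).mp hsm
      obtain ⟨b, rfl⟩ := (isSquare_iff_exists_sq n).mp hsn
      have hab : a.Coprime b :=
        (Nat.coprime_pow_right_iff (by norm_num) ..).mp
          ((Nat.coprime_pow_left_iff (by norm_num) ..).mp hmn)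
      rw [← mul_pow, g_sq, g_sq, g_sq,
        ArithmeticFunction.isMultiplicative_moebius.map_mul_of_coprime hab]
      push_cast
      ring
    · rw [g_not_sq hsn, g_not_sq (by
        rw [mul_comm]; exact not_sq_mul hmn.symm hsn), mul_zero]
  · rw [g_not_sq hsm, g_not_sq (not_sq_mul hmn hsm), zero_mul]

lemma not_sq_pp {p j : ℕ} (hp : p.Prime) (hj : Odd j) : ¬ IsSquare (p ^ j) := by
  rintro ⟨c, hc⟩
  have hc0 : c ≠ 0 := by
    rintro rfl
    rw [mul_zero] at hc
    exact (pow_ne_zero j hp.pos.ne') hc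
  have h1 : (p ^ j).factorization p = j := by
    simp [hp.factorization_pow]
  have h2 : (p ^ j).factorization p = 2 * c.factorization p := by
    rw [hc, Nat.factorization_mul hc0 hc0]
    simp [two_mul]
  rw [h1] at h2
  exact (Nat.not_even_iff_odd.mpr hj) ⟨c.factorization p, by omega⟩

/-- The right-hand side as an arithmetic function. -/
noncomputable def Rf (h : ℕ) : ArithmeticFunction ℝ :=
  (((ArithmeticFunction.pow h : ArithmeticFunction ℕ) : ArithmeticFunction ℝ)).pmul
    (ArithmeticFunction.prodPrimeFactors fun p => 1 + 1 / (p : ℝ) ^ h)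

lemma Rf_mult (h : ℕ) : (Rf h).IsMultiplicative :=
  (ArithmeticFunction.isMultiplicative_pow.natCast).pmul
    (ArithmeticFunction.IsMultiplicative.prodPrimeFactors _)

lemma Rf_apply {h n : ℕ} (hn : n ≠ 0) :
    Rf h n = (n : ℝ) ^ h * ∏ p ∈ n.primeFactors, (1 + 1 / (p : ℝ) ^ h) := by
  rw [Rf, ArithmeticFunction.pmul_apply, ArithmeticFunction.natCoe_apply,
    ArithmeticFunction.pow_apply, ArithmeticFunction.prodPrimeFactors_apply hn]
  simp [hn]

noncomputable abbrev S (h : ℕ) : ArithmeticFunction ℝ :=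
  (ArithmeticFunction.sigma h : ArithmeticFunction ℝ)

lemma S_apply (h k : ℕ) : S h k = ∑ m ∈ k.divisors, (m : ℝ) ^ h := by
  rw [S, ArithmeticFunction.natCoe_apply, ArithmeticFunction.sigma_apply]
  push_cast
  rfl

lemma key (h : ℕ) (hh : 0 < h) : g * S h = Rf h := by
  rw [ArithmeticFunction.IsMultiplicative.eq_iff_eq_on_prime_powers _
    (g_mult.mul (ArithmeticFunction.isMultiplicative_sigma.natCast)) _ (Rf_mult h)]
  intro p i hp
  have hp0 : (0 : ℝ) < (p : ℝ) := by exact_mod_cast hp.pos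
  have hph : ((p : ℝ) ^ h) ≠ 0 := by positivity
  rw [ArithmeticFunction.mul_apply,
    Nat.sum_divisorsAntidiagonal (f := fun a b => g a * S h b),
    Nat.sum_divisors_prime_pow hp]
  have hdiv : ∀ j ∈ Finset.range (i + 1), p ^ i / p ^ j = p ^ (i - j) := by
    intro j hj
    rw [Finset.mem_range] at hj
    rw [Nat.pow_div (by omega) hp.pos]
  rw [Finset.sum_congr rfl fun j hj => by rw [hdiv j hj]]
  have hSexp : ∀ k : ℕ, S h (p ^ k) = ∑ j ∈ Finset.range (k + 1), ((p : ℝ) ^ j) ^ h := by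
    intro k
    rw [S_apply, Nat.sum_divisors_prime_pow hp]
    push_cast
    rfl
  match i with
  | 0 =>
    simp only [Finset.sum_range_succ, Finset.sum_range_zero, zero_add, Nat.sub_self,
      pow_zero, g_one, one_mul]
    rw [(Rf_mult h).map_one]
    exact (ArithmeticFunction.isMultiplicative_sigma.natCast).map_one
  | 1 =>
    rw [Finset.sum_range_succ, Finset.sum_range_succ, Finset.sum_range_zero, zero_add]
    simp only [Nat.sub_zero, Nat.sub_self, pow_zero, g_one, one_mul]
    rw [g_not_sq (not_sq_pp hp (by norm_num : Odd 1)), zero_mul, add_zero,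
      Rf_apply (pow_ne_zero 1 hp.pos.ne'), hSexp, Finset.sum_range_succ,
      Finset.sum_range_succ, Finset.sum_range_zero, zero_add]
    rw [Nat.primeFactors_pow p one_ne_zero, hp.primeFactors, Finset.prod_singleton]
    push_cast
    field_simp
    ring
  | (k + 2) =>
    have hsub : ({0, 2} : Finset ℕ) ⊆ Finset.range (k + 2 + 1) := by
      intro x hx
      simp only [Finset.mem_insert, Finset.mem_singleton] at hx
      rw [Finset.mem_range]
      omega
    have hvan : ∀ j ∈ Finset.range (k + 2 + 1), j ∉ ({0, 2} : Finset ℕ) →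
        g (p ^ j) * S h (p ^ (k + 2 - j)) = 0 := by
      intro j _ hj2
      rcases Nat.even_or_odd j with hje | hjo
      · obtain ⟨t, rfl⟩ := hje
        have ht : 2 ≤ t := by
          simp only [Finset.mem_insert, Finset.mem_singleton] at hj2
          omega
        have hgv : g (p ^ (t + t)) = (μ (p ^ t) : ℝ) := by
          have := g_sq (p ^ t)
          rwa [← pow_mul, show t * 2 = t + t by ring] at this
        rw [hgv, ArithmeticFunction.moebius_eq_zero_of_not_squarefree, Int.cast_zero,
          zero_mul]
        intro hsf
        have hdvd : p * p ∣ p ^ t := by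
          have : p ^ 2 ∣ p ^ t := pow_dvd_pow p ht
          simpa [sq] using this
        exact hp.one_lt.ne' (Nat.isUnit_iff.mp (hsf p hdvd))
      · rw [g_not_sq (not_sq_pp hp hjo), zero_mul]
    rw [← Finset.sum_subset hsub hvan]
    rw [Finset.sum_insert (by decide), Finset.sum_singleton]
    have hgp2 : g (p ^ 2) = (μ p : ℝ) := g_sq p
    rw [pow_zero, g_one, one_mul, hgp2, ArithmeticFunction.moebius_apply_prime hp]
    have h1 : k + 2 - 0 = k + 2 := rfl
    have h2 : k + 2 - 2 = k := rfl
    rw [h1, h2, hSexp, hSexp,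
      Rf_apply (pow_ne_zero (k + 2) hp.pos.ne'),
      Nat.primeFactors_pow p (by omega), hp.primeFactors]
    rw [show k + 2 + 1 = (k + 1) + 1 + 1 from rfl, Finset.sum_range_succ,
      Finset.sum_range_succ (n := k + 1)]
    push_cast
    rw [Finset.prod_singleton]
    have hpk : ((p : ℝ) ^ (k + 2)) ^ h = ((p : ℝ) ^ (k + 1)) ^ h * (p : ℝ) ^ h := by
      rw [← mul_pow, ← pow_succ]
    rw [hpk]
    field_simp
    ring

end Stmt4Aux

theorem stmt_4 (n h : ℕ) (hn : 0 < n) (hh : 0 < h) :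
    ∑ d ∈ n.divisors.filter (fun d => d ^ 2 ∣ n),
        (ArithmeticFunction.moebius d : ℝ) * ∑ m ∈ (n / d ^ 2).divisors, (m : ℝ) ^ h =
      (n : ℝ) ^ h * ∏ p ∈ n.primeFactors, (1 + 1 / (p : ℝ) ^ h) := by
  classical
  have hstep : ∑ d ∈ n.divisors.filter (fun d => d ^ 2 ∣ n),
      (ArithmeticFunction.moebius d : ℝ) * ∑ m ∈ (n / d ^ 2).divisors, (m : ℝ) ^ h =
      ∑ e ∈ n.divisors.filter (fun e => IsSquare e), Stmt4Aux.g e * Stmt4Aux.S h (n / e) := by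
    refine Finset.sum_nbij' (fun d => d ^ 2) (fun e => e.sqrt) ?_ ?_ ?_ ?_ ?_
    · intro d hd
      simp only [Finset.mem_filter, Nat.mem_divisors] at hd ⊢
      exact ⟨⟨hd.2, hn.ne'⟩, IsSquare.sq d⟩
    · intro e he
      simp only [Finset.mem_filter, Nat.mem_divisors] at he ⊢
      obtain ⟨⟨hed, -⟩, a, ha⟩ := he
      subst ha
      rw [← sq] at hed ⊢
      rw [Nat.sqrt_eq']
      exact ⟨⟨dvd_trans (dvd_pow_self a two_ne_zero) hed, hn.ne'⟩, hed⟩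
    · intro d _
      exact Nat.sqrt_eq' d
    · intro e he
      simp only [Finset.mem_filter] at he
      obtain ⟨-, a, ha⟩ := he
      subst ha
      show ((a * a).sqrt) ^ 2 = a * a
      rw [← sq, Nat.sqrt_eq']
    · intro d _
      rw [Stmt4Aux.g_sq, Stmt4Aux.S_apply]
  rw [hstep,
    Finset.sum_filter_of_ne (fun x _ hfx => by
      by_contra hsq
      exact hfx (by rw [Stmt4Aux.g_not_sq hsq, zero_mul])),
    ← Nat.sum_divisorsAntidiagonal (f := fun a b => Stmt4Aux.g a * Stmt4Aux.S h b),
    ← ArithmeticFunction.mul_apply, Stmt4Aux.key h hh, Stmt4Aux.Rf_apply hn.ne']
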